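/- Close coarse maps are coarsely homotopic by an explicit elementary homotopy: let X and Y be coarse spaces, let R be a generalised ray, let p : X → R be a coarse map, and let f₀, f₁ : X → Y be coarse maps that are close to each other. Define H : I_pX → Y by H(x,t) = f₀(x) if t < 1 and H(x,t) = f₁(x) if t ≥ 1. Then H is a coarse map, H ∘ i₀ = f₀, and H ∘ i₁ = f₁. -/

import Mathlib

/-- An (abstract, unital) coarse structure on a set `X`: a collection of
"controlled" subsets of `X × X` containing the diagonal, closed under subsets,
finite unions, transposes and composites, whose union is all of `X × X`. -/
structure CoarseStructure (X : Type*) where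
  IsControlled : Set (X × X) → Prop
  isControlled_diagonal : IsControlled {p : X × X | p.1 = p.2}
  isControlled_subset : ∀ {M N : Set (X × X)}, IsControlled M → N ⊆ M → IsControlled N
  isControlled_union : ∀ {M N : Set (X × X)}, IsControlled M → IsControlled N →
    IsControlled (M ∪ N)
  isControlled_transpose : ∀ {M : Set (X × X)}, IsControlled M →
    IsControlled (Prod.swap '' M)
  isControlled_comp : ∀ {M N : Set (X × X)}, IsControlled M → IsControlled N →
    IsControlled {p : X × X | ∃ y, (p.1, y) ∈ M ∧ (y, p.2) ∈ N}
  isControlled_covers : ∀ p : X × X, ∃ M, IsControlled M ∧ p ∈ M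

/-- A subset `B` of a coarse space is bounded if `B ⊆ M(x)` for some controlled
set `M` and point `x`. -/
def CoarseStructure.IsBoundedSet {X : Type*} (C : CoarseStructure X) (B : Set X) : Prop :=
  ∃ M, C.IsControlled M ∧ ∃ x : X, B ⊆ {y : X | (x, y) ∈ M}

/-- A coarse structure on a (Hausdorff) topological space is compatible with the
topology if every controlled set is contained in an open controlled set and the
closure of every bounded set is compact. -/
structure CoarseStructure.Compatible {X : Type*} [TopologicalSpace X]
    (C : CoarseStructure X) : Prop where
  exists_open_controlled : ∀ M : Set (X × X), C.IsControlled M →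
    ∃ U : Set (X × X), IsOpen U ∧ C.IsControlled U ∧ M ⊆ U
  isCompact_closure_of_isBoundedSet : ∀ B : Set X, C.IsBoundedSet B → IsCompact (closure B)

open scoped NNReal

/-- A generalised ray: a coarse structure on `[0,∞)` compatible with the
topology, closed under sums, interval saturations, and translates of
controlled sets. -/
structure IsGeneralisedRay (C : CoarseStructure ℝ≥0) : Prop where
  compatible : C.Compatible
  isControlled_sum : ∀ M N : Set (ℝ≥0 × ℝ≥0), C.IsControlled M → C.IsControlled N →
    C.IsControlled {q : ℝ≥0 × ℝ≥0 |
      ∃ u v x y : ℝ≥0, (u, v) ∈ M ∧ (x, y) ∈ N ∧ q = (u + x, v + y)}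
  isControlled_interval : ∀ M : Set (ℝ≥0 × ℝ≥0), C.IsControlled M →
    C.IsControlled {q : ℝ≥0 × ℝ≥0 |
      ∃ x y : ℝ≥0, (x, y) ∈ M ∧ x ≤ q.1 ∧ q.1 ≤ y ∧ x ≤ q.2 ∧ q.2 ≤ y}
  isControlled_translate : ∀ M : Set (ℝ≥0 × ℝ≥0), C.IsControlled M → ∀ a : ℝ≥0,
    C.IsControlled {q : ℝ≥0 × ℝ≥0 | ∃ x y : ℝ≥0, (x, y) ∈ M ∧ q = (a + x, a + y)}

/-- A coarse map between sets with given collections of controlled sets: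
images of controlled sets are controlled, and preimages of bounded sets are
bounded. -/
def IsCoarseMapP {α β : Type*} (cα : Set (α × α) → Prop) (cβ : Set (β × β) → Prop)
    (f : α → β) : Prop :=
  (∀ M : Set (α × α), cα M → cβ (Prod.map f f '' M)) ∧
  (∀ B : Set β, (∃ M, cβ M ∧ ∃ y : β, B ⊆ {z : β | (y, z) ∈ M}) →
    (∃ M, cα M ∧ ∃ x : α, f ⁻¹' B ⊆ {z : α | (x, z) ∈ M}))

/-- The product coarse structure on `X × R` (restricted to which the cylinder
coarse structure is defined). -/
def ProdControlled {X : Type*} (CX : CoarseStructure X) (CR : CoarseStructure ℝ≥0)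
    (M : Set ((X × ℝ≥0) × (X × ℝ≥0))) : Prop :=
  ∃ M₁ M₂, CX.IsControlled M₁ ∧ CR.IsControlled M₂ ∧
    M ⊆ {q : (X × ℝ≥0) × (X × ℝ≥0) | (q.1.1, q.2.1) ∈ M₁ ∧ (q.1.2, q.2.2) ∈ M₂}

/-- The `p`-cylinder `I_pX = {(x,t) ∈ X × R : t ≤ p(x) + 1}`. -/
abbrev Cylinder {X : Type*} (p : X → ℝ≥0) : Type _ :=
  {q : X × ℝ≥0 // q.2 ≤ p q.1 + 1}

/-- The coarse structure of the cylinder, restricted from the product coarse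
structure. -/
def CylControlled {X : Type*} (CX : CoarseStructure X) (CR : CoarseStructure ℝ≥0)
    (p : X → ℝ≥0) (M : Set (Cylinder p × Cylinder p)) : Prop :=
  ProdControlled CX CR (Prod.map Subtype.val Subtype.val '' M)

/-- The bottom inclusion `i₀(x) = (x, 0)` of the cylinder. -/
def cylI0 {X : Type*} (p : X → ℝ≥0) (x : X) : Cylinder p := ⟨(x, 0), zero_le'⟩

/-- The top inclusion `i₁(x) = (x, p(x) + 1)` of the cylinder. -/
def cylI1 {X : Type*} (p : X → ℝ≥0) (x : X) : Cylinder p := ⟨(x, p x + 1), le_rfl⟩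

/-- The homotopy `H(x,t) = f₀(x)` for `t < 1`, `H(x,t) = f₁(x)` for `t ≥ 1`. -/
noncomputable def cylH {X Y : Type*} (p : X → ℝ≥0) (f₀ f₁ : X → Y) (q : Cylinder p) : Y :=
  if q.val.2 < 1 then f₀ q.val.1 else f₁ q.val.1

/-- Close coarse maps are coarsely homotopic via the explicit
elementary homotopy `H`: `H` is a coarse map on the cylinder, `H ∘ i₀ = f₀`
and `H ∘ i₁ = f₁`. -/
theorem close_coarse_maps_explicit_homotopy {X Y : Type*}
    (CX : CoarseStructure X) (CY : CoarseStructure Y) (CR : CoarseStructure ℝ≥0)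
    (hCR : IsGeneralisedRay CR)
    (p : X → ℝ≥0) (hp : IsCoarseMapP CX.IsControlled CR.IsControlled p)
    (f₀ f₁ : X → Y)
    (hf₀ : IsCoarseMapP CX.IsControlled CY.IsControlled f₀)
    (hf₁ : IsCoarseMapP CX.IsControlled CY.IsControlled f₁)
    (hclose : CY.IsControlled (Set.range fun x : X => (f₀ x, f₁ x))) :
    IsCoarseMapP (CylControlled CX CR p) CY.IsControlled (cylH p f₀ f₁) ∧
    (∀ x : X, cylH p f₀ f₁ (cylI0 p x) = f₀ x) ∧
    (∀ x : X, cylH p f₀ f₁ (cylI1 p x) = f₁ x) := by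
  set E := Set.range fun x : X => (f₀ x, f₁ x) with hE
  refine ⟨⟨?_, ?_⟩, ?_, ?_⟩
  · -- controlledness
    intro M hM
    obtain ⟨M₁, M₂, hM₁, hM₂, hsub⟩ := hM
    have h0 := hf₀.1 M₁ hM₁
    have h1 := hf₁.1 M₁ hM₁
    have hc1 : CY.IsControlled {q : Y × Y | ∃ y, (q.1, y) ∈ Prod.map f₀ f₀ '' M₁ ∧
        (y, q.2) ∈ E} := CY.isControlled_comp h0 hclose
    have hc2 : CY.IsControlled {q : Y × Y | ∃ y, (q.1, y) ∈ Prod.swap '' E ∧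
        (y, q.2) ∈ Prod.map f₀ f₀ '' M₁} :=
      CY.isControlled_comp (CY.isControlled_transpose hclose) h0
    refine CY.isControlled_subset
      (CY.isControlled_union (CY.isControlled_union h0 h1)
        (CY.isControlled_union hc1 hc2)) ?_
    rintro _ ⟨⟨q, r⟩, hqr, rfl⟩
    have hmem : ((q.val, r.val) : (X × ℝ≥0) × (X × ℝ≥0)) ∈
        Prod.map Subtype.val Subtype.val '' M := ⟨(q, r), hqr, rfl⟩
    have hx : (q.val.1, r.val.1) ∈ M₁ := (hsub hmem).1
    simp only [Prod.map, cylH]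
    by_cases hq : q.val.2 < 1 <;> by_cases hr : r.val.2 < 1 <;>
      simp only [if_pos, if_neg, hq, hr, if_true, if_false]
    · exact Or.inl (Or.inl ⟨(q.val.1, r.val.1), hx, rfl⟩)
    · exact Or.inr (Or.inl ⟨f₀ r.val.1, ⟨(q.val.1, r.val.1), hx, rfl⟩, ⟨r.val.1, rfl⟩⟩)
    · exact Or.inr (Or.inr ⟨f₀ q.val.1, ⟨(f₀ q.val.1, f₁ q.val.1), ⟨q.val.1, rfl⟩, rfl⟩,
        ⟨(q.val.1, r.val.1), hx, rfl⟩⟩)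
    · exact Or.inl (Or.inr ⟨(q.val.1, r.val.1), hx, rfl⟩)
  · -- properness
    intro B hB
    obtain ⟨M₀x, hM₀x, x₀, hx₀⟩ := hf₀.2 B hB
    obtain ⟨M₁x, hM₁x, x₁, hx₁⟩ := hf₁.2 B hB
    obtain ⟨N, hN, hN01⟩ := CX.isControlled_covers (x₀, x₁)
    set K := M₀x ∪ {q : X × X | ∃ y, (q.1, y) ∈ N ∧ (y, q.2) ∈ M₁x} with hKdef
    have hK : CX.IsControlled K :=
      CX.isControlled_union hM₀x (CX.isControlled_comp hN hM₁x)
    have hAK : ∀ x, x ∈ f₀ ⁻¹' B ∪ f₁ ⁻¹' B → (x₀, x) ∈ K := by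
      rintro x (hx | hx)
      · exact Or.inl (hx₀ hx)
      · exact Or.inr ⟨x₁, hN01, hx₁ hx⟩
    have hpK : CR.IsControlled (Prod.map p p '' K) := hp.1 K hK
    obtain ⟨N₁, hN₁, hN₁01⟩ := CR.isControlled_covers (0, 1)
    obtain ⟨S₀, hS₀, hS₀m⟩ := CR.isControlled_covers (0, p x₀)
    set MN := {q : ℝ≥0 × ℝ≥0 | ∃ u v x y : ℝ≥0, (u, v) ∈ Prod.map p p '' K ∧
      (x, y) ∈ N₁ ∧ q = (u + x, v + y)} with hMNdef
    have hMN : CR.IsControlled MN := hCR.isControlled_sum _ _ hpK hN₁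
    set S := {q : ℝ≥0 × ℝ≥0 | ∃ y, (q.1, y) ∈ S₀ ∧ (y, q.2) ∈ MN} with hSdef
    have hS : CR.IsControlled S := CR.isControlled_comp hS₀ hMN
    set T := {q : ℝ≥0 × ℝ≥0 | ∃ x y : ℝ≥0, (x, y) ∈ S ∧ x ≤ q.1 ∧ q.1 ≤ y ∧
      x ≤ q.2 ∧ q.2 ≤ y} with hTdef
    have hT : CR.IsControlled T := hCR.isControlled_interval _ hS
    have hTmem : ∀ x : X, x ∈ f₀ ⁻¹' B ∪ f₁ ⁻¹' B → ∀ t : ℝ≥0, t ≤ p x + 1 →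
        (0, t) ∈ T := by
      intro x hx t ht
      refine ⟨0, p x + 1, ⟨p x₀, hS₀m, ?_⟩, le_rfl, zero_le', zero_le', ht⟩
      exact ⟨p x₀, p x, 0, 1, ⟨(x₀, x), hAK x hx, rfl⟩, hN₁01, by simp⟩
    refine ⟨{q : Cylinder p × Cylinder p | (q.1.val.1, q.2.val.1) ∈ K ∧
      (q.1.val.2, q.2.val.2) ∈ T}, ?_, ⟨(x₀, 0), zero_le'⟩, ?_⟩
    · refine ⟨K, T, hK, hT, ?_⟩
      rintro _ ⟨⟨q, r⟩, ⟨h1, h2⟩, rfl⟩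
      exact ⟨h1, h2⟩
    · intro z hz
      have hzA : z.val.1 ∈ f₀ ⁻¹' B ∪ f₁ ⁻¹' B := by
        simp only [Set.mem_preimage, cylH] at hz ⊢
        by_cases h : z.val.2 < 1
        · exact Or.inl (by rwa [if_pos h] at hz)
        · exact Or.inr (by rwa [if_neg h] at hz)
      exact ⟨hAK _ hzA, hTmem _ hzA _ z.property⟩
  · intro x
    simp [cylH, cylI0]
  · intro x
    simp [cylH, cylI1]
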